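/- Let K be a field, A = K⟨X,Y⟩ the free associative K-algebra on two generators, and let I be a left A-module that is injective and contains A as an essential submodule (i.e., every nonzero submodule of I intersects A nontrivially). Then I is superdecomposable: every nonzero direct summand N of I admits a decomposition N = N₁ ⊕ N₂ with both N₁ and N₂ nonzero. In particular, I has no indecomposable direct summands. -/

import Mathlib

universe u

open Submodule

section InjectiveSplit

variable {R : Type u} [Ring R] {M : Type u} [AddCommGroup M] [Module R M]

/-- In an injective module, two nonzero submodules with trivial intersection give rise to a
nontrivial direct sum decomposition of the whole module. -/
theorem exists_split_of_injective (hI : Module.Injective R M)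
    (P₁ P₂ : Submodule R M) (h1 : P₁ ≠ ⊥) (h2 : P₂ ≠ ⊥) (h12 : P₁ ⊓ P₂ = ⊥) :
    ∃ N₁ N₂ : Submodule R M, N₁ ≠ ⊥ ∧ N₂ ≠ ⊥ ∧ N₁ ⊓ N₂ = ⊥ ∧ N₁ ⊔ N₂ = ⊤ := by
  classical
  -- `Ess E` : `E` is an essential extension of `P₁`
  set Ess : Submodule R M → Prop :=
    fun E => P₁ ≤ E ∧ ∀ x ∈ E, x ≠ 0 → ∃ r : R, r • x ∈ P₁ ∧ r • x ≠ 0 with hEssDef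
  have hP₁s : Ess P₁ := ⟨le_rfl, fun x hx hx0 => ⟨1, by simpa using hx, by simpa using hx0⟩⟩
  -- Zorn: a maximal essential extension `E` of `P₁`
  obtain ⟨E, -, hE, hEmax⟩ :
      ∃ E, P₁ ≤ E ∧ Ess E ∧ ∀ E', Ess E' → E ≤ E' → E' ≤ E := by
    obtain ⟨E, hPE, hmax⟩ := zorn_le_nonempty₀ {E | Ess E} (fun c hc hchain y hy => by
      refine ⟨sSup c, ⟨?_, ?_⟩, fun z hz => le_sSup hz⟩
      · exact le_trans (hc hy).1 (le_sSup hy)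
      · intro x hx hx0
        obtain ⟨E', hE'c, hxE'⟩ := Submodule.mem_sSup_of_directed ⟨y, hy⟩
          hchain.directedOn |>.mp hx
        exact (hc hE'c).2 x hxE' hx0) P₁ hP₁s
    exact ⟨E, hPE, hmax.1, fun E' hE' hle => hmax.2 hE' hle⟩
  -- `P₂ ⊓ E = ⊥`
  have hP₂E : P₂ ⊓ E = ⊥ := by
    rw [Submodule.eq_bot_iff]
    intro x ⟨hx2, hxE⟩
    by_contra hx0
    obtain ⟨r, hrP, hr0⟩ := hE.2 x hxE hx0
    exact hr0 ((Submodule.eq_bot_iff _).mp h12 _ ⟨hrP, P₂.smul_mem r hx2⟩)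
  -- Zorn: `S` maximal with `P₂ ≤ S` and `S ⊓ E = ⊥`
  obtain ⟨S, -, hS, hSmax⟩ :
      ∃ S, P₂ ≤ S ∧ (P₂ ≤ S ∧ S ⊓ E = ⊥) ∧
        ∀ S', (P₂ ≤ S' ∧ S' ⊓ E = ⊥) → S ≤ S' → S' ≤ S := by
    obtain ⟨S, hPS, hmax⟩ := zorn_le_nonempty₀ {S | P₂ ≤ S ∧ S ⊓ E = ⊥}
      (fun c hc hchain y hy => by
        refine ⟨sSup c, ⟨le_trans (hc hy).1 (le_sSup hy), ?_⟩, fun z hz => le_sSup hz⟩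
        rw [Submodule.eq_bot_iff]
        intro x ⟨hx1, hx2⟩
        obtain ⟨S', hS'c, hxS'⟩ := Submodule.mem_sSup_of_directed ⟨y, hy⟩
          hchain.directedOn |>.mp hx1
        exact (Submodule.eq_bot_iff _).mp (hc hS'c).2 x ⟨hxS', hx2⟩) P₂ ⟨le_rfl, hP₂E⟩
    exact ⟨S, hPS, hmax.1, fun S' h' hle => hmax.2 h' hle⟩
  -- key consequence of maximality of `S`
  have fact3 : ∀ x : M, x ∉ S → ∃ (r : R) (e s : M),
      e ∈ E ∧ e ≠ 0 ∧ s ∈ S ∧ r • x = e + s := by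
    intro x hx
    have hne : (S ⊔ span R {x}) ⊓ E ≠ ⊥ := by
      intro hbot
      exact hx <| (hSmax _ ⟨le_trans hS.1 le_sup_left, hbot⟩ le_sup_left)
        (Submodule.mem_sup_right (Submodule.mem_span_singleton_self x))
    obtain ⟨e, ⟨heSS, heE⟩, he0⟩ := Submodule.ne_bot_iff _ |>.mp hne
    obtain ⟨s, hsS, z, hz, hsz⟩ := Submodule.mem_sup.mp heSS
    obtain ⟨r, rfl⟩ := Submodule.mem_span_singleton.mp hz
    refine ⟨r, e, -s, heE, he0, S.neg_mem hsS, ?_⟩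
    rw [← hsz]
    abel
  -- the extension of the inclusion `E ↪ M` along `E ↪ M ⧸ S`
  have hfinj : Function.Injective ((S.mkQ).comp E.subtype) := by
    intro a b hab
    have : (a : M) - (b : M) ∈ S := by
      rwa [← Submodule.Quotient.eq]
    have hmem : (a : M) - (b : M) ∈ S ⊓ E := ⟨this, E.sub_mem a.2 b.2⟩
    rw [hS.2] at hmem
    exact Subtype.ext (by simpa [sub_eq_zero] using hmem)
  obtain ⟨h, hh⟩ := hI.out ((S.mkQ).comp E.subtype) hfinj E.subtype
  set π : M →ₗ[R] M := h.comp S.mkQ with hπdef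
  have hπE : ∀ e ∈ E, π e = e := by
    intro e he
    exact hh ⟨e, he⟩
  have hπS : ∀ s ∈ S, π s = 0 := by
    intro s hs
    have : S.mkQ s = 0 := (Submodule.Quotient.mk_eq_zero S).mpr hs
    simp [hπdef, LinearMap.comp_apply, this]
  -- the range of `π` is an essential extension of `P₁` containing `E`, hence equals `E`
  have hrangeE : ∀ x : M, π x ∈ E := by
    have hEle : E ≤ LinearMap.range π := fun e he => ⟨e, hπE e he⟩
    have hEss : Ess (LinearMap.range π) := by
      refine ⟨le_trans hE.1 hEle, ?_⟩
      rintro z ⟨x, rfl⟩ hz0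
      have hxS : x ∉ S := fun hxS => hz0 (hπS x hxS)
      obtain ⟨r, e, s, heE, he0, hsS, hrx⟩ := fact3 x hxS
      have hre : r • π x = e := by
        have : π (r • x) = π e + π s := by rw [hrx, map_add]
        rw [map_smul, hπE e heE, hπS s hsS, add_zero] at this
        exact this
      obtain ⟨r₂, hr₂P, hr₂0⟩ := hE.2 e heE he0
      exact ⟨r₂ * r, by rw [mul_smul, hre]; exact hr₂P, by rw [mul_smul, hre]; exact hr₂0⟩
    intro x
    exact hEmax _ hEss hEle ⟨x, rfl⟩
  refine ⟨E, LinearMap.ker π, ?_, ?_, ?_, ?_⟩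
  · intro hbot
    exact h1 (le_bot_iff.mp (hbot ▸ hE.1))
  · intro hbot
    have : P₂ ≤ LinearMap.ker π := fun x hx => LinearMap.mem_ker.mpr (hπS x (hS.1 hx))
    exact h2 (le_bot_iff.mp (hbot ▸ this))
  · rw [Submodule.eq_bot_iff]
    intro x ⟨hxE, hxK⟩
    have := hπE x hxE
    rw [LinearMap.mem_ker.mp hxK] at this
    exact this.symm
  · rw [eq_top_iff]
    intro x _
    refine Submodule.mem_sup.mpr ⟨π x, hrangeE x, x - π x, ?_, by abel⟩
    have : π (x - π x) = 0 := by
      rw [map_sub, hπE (π x) (hrangeE x), sub_self]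
    exact LinearMap.mem_ker.mpr this

end InjectiveSplit

section FreeAlg

variable {K : Type u} [Field K]

/-- In the free algebra on two generators, `u X = v Y` forces `u = 0`. -/
theorem freeAlg_cancel {u v : FreeAlgebra K (Fin 2)}
    (h : u * FreeAlgebra.ι K (0 : Fin 2) = v * FreeAlgebra.ι K (1 : Fin 2)) : u = 0 := by
  classical
  by_contra hu
  set e := FreeAlgebra.equivMonoidAlgebraFreeMonoid (R := K) (X := Fin 2) with he
  have hι : ∀ i : Fin 2, e (FreeAlgebra.ι K i)
      = MonoidAlgebra.single (FreeMonoid.of i) (1 : K) := by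
    intro i
    simp [he, FreeAlgebra.equivMonoidAlgebraFreeMonoid, FreeAlgebra.lift_ι_apply,
      MonoidAlgebra.of_apply]
  have h2 : e u * MonoidAlgebra.single (FreeMonoid.of (0 : Fin 2)) (1 : K)
      = e v * MonoidAlgebra.single (FreeMonoid.of (1 : Fin 2)) (1 : K) := by
    rw [← hι, ← hι, ← map_mul, ← map_mul, h]
  have hsupp := congrArg (fun p => p.coeff.support) h2
  rw [MonoidAlgebra.support_coeff_mul_single _ _ (fun y => by simp) _,
      MonoidAlgebra.support_coeff_mul_single _ _ (fun y => by simp) _] at hsupp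
  have heu : e u ≠ 0 := by
    intro h0
    apply hu
    have := congrArg e.symm h0
    simpa using this
  have hne : ((e u).coeff.support.map (mulRightEmbedding (FreeMonoid.of (0 : Fin 2)))).Nonempty := by
    rw [Finset.map_nonempty]
    exact Finsupp.support_nonempty_iff.mpr (MonoidAlgebra.coeff_eq_zero.not.mpr heu)
  obtain ⟨w, hw⟩ := hne
  have hw2 := hsupp ▸ hw
  obtain ⟨w₁, -, hw₁⟩ := Finset.mem_map.mp hw
  obtain ⟨w₂, -, hw₂⟩ := Finset.mem_map.mp hw2
  rw [mulRightEmbedding_apply] at hw₁ hw₂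
  have hlist : FreeMonoid.toList w₁ ++ [(0 : Fin 2)]
      = FreeMonoid.toList w₂ ++ [(1 : Fin 2)] := by
    have := hw₁.trans hw₂.symm
    simpa using congrArg FreeMonoid.toList this
  have h0 : some (0 : Fin 2) = some (1 : Fin 2) := by
    rw [← List.getLast?_concat (l := FreeMonoid.toList w₁),
        ← List.getLast?_concat (l := FreeMonoid.toList w₂), hlist]
  exact absurd h0 (by decide)

end FreeAlg

/-- An injective left module over the free algebra `K⟨X,Y⟩` containing the algebra as an
essential submodule is superdecomposable: every nonzero direct summand decomposes
nontrivially. -/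
theorem superdecomposable_injective_envelope
    (K : Type u) [Field K]
    (I : Type u) [AddCommGroup I] [Module (FreeAlgebra K (Fin 2)) I]
    (hInj : Module.Injective (FreeAlgebra K (Fin 2)) I)
    (j : FreeAlgebra K (Fin 2) →ₗ[FreeAlgebra K (Fin 2)] I)
    (hj : Function.Injective j)
    (hess : ∀ N : Submodule (FreeAlgebra K (Fin 2)) I, N ≠ ⊥ → N ⊓ LinearMap.range j ≠ ⊥) :
    ∀ N : Submodule (FreeAlgebra K (Fin 2)) I, N ≠ ⊥ → (∃ N', IsCompl N N') →
      ∃ N₁ N₂ : Submodule (FreeAlgebra K (Fin 2)) I,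
        N₁ ≠ ⊥ ∧ N₂ ≠ ⊥ ∧ N₁ ⊓ N₂ = ⊥ ∧ N₁ ⊔ N₂ = N := by
  classical
  set A := FreeAlgebra K (Fin 2) with hA
  intro N hN hcompl
  -- `N` is injective
  have hNinj : Module.Injective A ↥N := by
    obtain ⟨N', hc⟩ := hcompl
    constructor
    intro X Y _ _ _ _ f hf g
    obtain ⟨h, hh⟩ := hInj.out f hf (N.subtype.comp g)
    refine ⟨(N.linearProjOfIsCompl N' hc).comp h, fun x => ?_⟩
    have hx := hh x
    simp only [LinearMap.comp_apply] at hx ⊢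
    rw [hx]
    exact Submodule.linearProjOfIsCompl_apply_left hc (g x)
  -- pick a nonzero element of `N ∩ j(A)`
  obtain ⟨x, hx, hx0⟩ := Submodule.ne_bot_iff _ |>.mp (hess N hN)
  obtain ⟨hxN, a, rfl⟩ := hx
  have ha : a ≠ 0 := fun h0 => hx0 (by rw [h0, map_zero])
  set X := FreeAlgebra.ι K (0 : Fin 2) with hX
  set Y := FreeAlgebra.ι K (1 : Fin 2) with hY
  have hXa : X * a ≠ 0 := mul_ne_zero (FreeAlgebra.ι_ne_zero _) ha
  have hYa : Y * a ≠ 0 := mul_ne_zero (FreeAlgebra.ι_ne_zero _) ha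
  -- the two submodules generated by `j(Xa)` and `j(Ya)`
  have hw₁N : j (X * a) ∈ N := by
    have : j (X * a) = X • j a := by rw [← map_smul, smul_eq_mul]
    rw [this]; exact N.smul_mem X hxN
  have hw₂N : j (Y * a) ∈ N := by
    have : j (Y * a) = Y • j a := by rw [← map_smul, smul_eq_mul]
    rw [this]; exact N.smul_mem Y hxN
  have hw₁0 : j (X * a) ≠ 0 := fun h0 => hXa (hj (by rw [h0, map_zero]))
  have hw₂0 : j (Y * a) ≠ 0 := fun h0 => hYa (hj (by rw [h0, map_zero]))
  set P : Submodule A I := Submodule.span A {j (X * a)} with hP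
  set Q : Submodule A I := Submodule.span A {j (Y * a)} with hQ
  have hPN : P ≤ N := Submodule.span_le.mpr (by simpa using hw₁N)
  have hQN : Q ≤ N := Submodule.span_le.mpr (by simpa using hw₂N)
  have hPQ : P ⊓ Q = ⊥ := by
    rw [Submodule.eq_bot_iff]
    intro z ⟨hzP, hzQ⟩
    obtain ⟨u, rfl⟩ := Submodule.mem_span_singleton.mp hzP
    obtain ⟨v, huv⟩ := Submodule.mem_span_singleton.mp hzQ
    have h1 : u * (X * a) = v * (Y * a) := by
      apply hj
      show j (u • (X * a)) = j (v • (Y * a))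
      rw [map_smul, map_smul]
      exact huv.symm
    have h2 : (u * X - v * Y) * a = 0 := by
      rw [sub_mul, mul_assoc, mul_assoc, h1, sub_self]
    have h3 : u * X - v * Y = 0 := by
      rcases mul_eq_zero.mp h2 with h | h
      · exact h
      · exact absurd h ha
    have h4 : u * X = v * Y := sub_eq_zero.mp h3
    have h5 : u = 0 := freeAlg_cancel h4
    rw [h5, zero_smul]
  -- pull back to submodules of `↥N`
  set P' : Submodule A ↥N := Submodule.comap N.subtype P with hP'
  set Q' : Submodule A ↥N := Submodule.comap N.subtype Q with hQ'
  have hP'0 : P' ≠ ⊥ := by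
    apply Submodule.ne_bot_iff _ |>.mpr
    refine ⟨⟨j (X * a), hw₁N⟩, ?_, ?_⟩
    · exact Submodule.mem_span_singleton_self _
    · intro h0
      exact hw₁0 (congrArg Subtype.val h0)
  have hQ'0 : Q' ≠ ⊥ := by
    apply Submodule.ne_bot_iff _ |>.mpr
    refine ⟨⟨j (Y * a), hw₂N⟩, ?_, ?_⟩
    · exact Submodule.mem_span_singleton_self _
    · intro h0
      exact hw₂0 (congrArg Subtype.val h0)
  have hP'Q' : P' ⊓ Q' = ⊥ := by
    rw [hP', hQ', ← Submodule.comap_inf, hPQ]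
    rw [Submodule.comap_bot, Submodule.ker_subtype]
  obtain ⟨N₁', N₂', h1, h2, h3, h4⟩ := exists_split_of_injective hNinj P' Q' hP'0 hQ'0 hP'Q'
  refine ⟨Submodule.map N.subtype N₁', Submodule.map N.subtype N₂', ?_, ?_, ?_, ?_⟩
  · obtain ⟨y, hy, hy0⟩ := Submodule.ne_bot_iff _ |>.mp h1
    exact Submodule.ne_bot_iff _ |>.mpr
      ⟨(y : I), ⟨y, hy, rfl⟩, fun h => hy0 (Subtype.ext h)⟩
  · obtain ⟨y, hy, hy0⟩ := Submodule.ne_bot_iff _ |>.mp h2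
    exact Submodule.ne_bot_iff _ |>.mpr
      ⟨(y : I), ⟨y, hy, rfl⟩, fun h => hy0 (Subtype.ext h)⟩
  · rw [← Submodule.map_inf _ N.injective_subtype, h3, Submodule.map_bot]
  · rw [← Submodule.map_sup, h4, Submodule.map_subtype_top]
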